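/- Let g ∈ G be a Lebesgue-measure-preserving piecewise affine map of [0,1] with dyadic breakpoints and slopes ±2^k. If g is topologically mixing, then g is locally eventually onto: for every nonempty open U ⊆ [0,1] there exists N with g^N(U) = [0,1]. -/

import Mathlib

open Set MeasureTheory

/-- A real number is dyadic if it is an integer divided by a power of 2. -/
def IsDyadic (x : ℝ) : Prop := ∃ (z : ℤ) (n : ℕ), x = (z : ℝ) / 2 ^ n

/-- Membership in the Lebesgue-measure-preserving Thompson monoid 𝔾. -/
def InG (g : ℝ → ℝ) : Prop :=
  ContinuousOn g (Icc 0 1) ∧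
  MapsTo g (Icc (0:ℝ) 1) (Icc (0:ℝ) 1) ∧
  SurjOn g (Icc (0:ℝ) 1) (Icc (0:ℝ) 1) ∧
  (∀ A ⊆ Icc (0:ℝ) 1, MeasurableSet A →
    volume (g ⁻¹' A ∩ Icc 0 1) = volume A) ∧
  ∃ (n : ℕ) (p : ℕ → ℝ), 0 < n ∧ p 0 = 0 ∧ p n = 1 ∧
    (∀ i < n, p i < p (i + 1)) ∧ (∀ i ≤ n, IsDyadic (p i)) ∧
    ∀ i < n, ∃ (k : ℤ) (ε b : ℝ), (ε = 1 ∨ ε = -1) ∧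
      ∀ x ∈ Icc (p i) (p (i + 1)), g x = ε * 2 ^ k * x + b

/-- A relatively open subset of `[0,1]`. -/
def RelOpen (U : Set ℝ) : Prop := ∃ V : Set ℝ, IsOpen V ∧ U = V ∩ Icc 0 1

/-- Topological mixing on `[0,1]`. -/
def TopMixing (g : ℝ → ℝ) : Prop :=
  ∀ U V : Set ℝ, RelOpen U → RelOpen V → U.Nonempty → V.Nonempty →
    ∃ N : ℕ, ∀ n ≥ N, (g^[n] '' U ∩ V).Nonempty

/-- Locally eventually onto on `[0,1]`. -/
def LEO (g : ℝ → ℝ) : Prop :=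
  ∀ U : Set ℝ, RelOpen U → U.Nonempty → ∃ N : ℕ, g^[N] '' U = Icc 0 1

lemma two_zpow_eq_one' {k : ℤ} (h : (2:ℝ)^k = 1) : k = 0 := by
  by_contra hk
  rcases lt_or_gt_of_ne hk with h1 | h1 <;>
  · have := zpow_lt_zpow_right₀ (a := (2:ℝ)) one_lt_two h1
    rw [h, zpow_zero] at this; exact lt_irrefl _ this

lemma relOpen_Ioo_inter (a b : ℝ) : RelOpen (Ioo a b ∩ Icc 0 1) :=
  ⟨Ioo a b, isOpen_Ioo, rfl⟩

lemma no_id_piece {g : ℝ → ℝ} (htm : TopMixing g) {c d : ℝ} (h0 : 0 ≤ c) (hcd : c < d)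
    (hd1 : d ≤ 1) (hid : ∀ x ∈ Icc c d, g x = x) : False := by
  have hiter : ∀ m, ∀ x ∈ Icc c d, g^[m] x = x := by
    intro m
    induction m with
    | zero => intro x _; simp
    | succ m ih =>
      intro x hx
      rw [Function.iterate_succ_apply, hid x hx, ih x hx]
  set e := (c + d) / 2 with he
  have hce : c < e := by rw [he]; linarith
  have hed : e < d := by rw [he]; linarith
  obtain ⟨N, hN⟩ := htm (Ioo e d ∩ Icc 0 1) (Ioo c e ∩ Icc 0 1)
    (relOpen_Ioo_inter _ _) (relOpen_Ioo_inter _ _)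
    ⟨(e + d) / 2, ⟨by linarith, by linarith⟩, by constructor <;> linarith⟩
    ⟨(c + e) / 2, ⟨by linarith, by linarith⟩, by constructor <;> linarith⟩
  obtain ⟨y, ⟨x, ⟨hxIoo, _⟩, rfl⟩, hyV⟩ := hN N le_rfl
  rw [hiter N x ⟨by linarith [hxIoo.1], hxIoo.2.le⟩] at hyV
  exact absurd hyV.1.2 (not_lt.mpr hxIoo.1.le)

lemma no_per2 {g : ℝ → ℝ} (htm : TopMixing g) {d : ℝ} (h0 : 0 < d) (hd1 : d ≤ 1)
    (hid : ∀ x ∈ Icc (0:ℝ) d, g (g x) = x) : False := by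
  have hiter : ∀ m, ∀ x ∈ Icc (0:ℝ) d, g^[2 * m] x = x := by
    intro m
    induction m with
    | zero => intro x _; simp
    | succ m ih =>
      intro x hx
      have h2 : 2 * (m + 1) = 2 * m + 2 := by ring
      rw [h2, Function.iterate_add_apply]
      have : g^[2] x = x := by
        rw [Function.iterate_succ_apply, Function.iterate_one, hid x hx]
      rw [this, ih x hx]
  set e := d / 2 with he
  have hce : 0 < e := by rw [he]; linarith
  have hed : e < d := by rw [he]; linarith
  obtain ⟨N, hN⟩ := htm (Ioo e d ∩ Icc 0 1) (Ioo 0 e ∩ Icc 0 1)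
    (relOpen_Ioo_inter _ _) (relOpen_Ioo_inter _ _)
    ⟨(e + d) / 2, ⟨by linarith, by linarith⟩, by constructor <;> linarith⟩
    ⟨e / 2, ⟨by linarith, by linarith⟩, by constructor <;> linarith⟩
  obtain ⟨y, ⟨x, ⟨hxIoo, _⟩, rfl⟩, hyV⟩ := hN (2 * N) (by omega)
  rw [hiter N x ⟨by linarith [hxIoo.1], hxIoo.2.le⟩] at hyV
  exact absurd hyV.1.2 (not_lt.mpr hxIoo.1.le)

lemma left_slope {g : ℝ → ℝ}
    (hmt : MapsTo g (Icc (0:ℝ) 1) (Icc (0:ℝ) 1))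
    (hgc : ContinuousOn g (Icc (0:ℝ) 1))
    (hvol : ∀ A ⊆ Icc (0:ℝ) 1, MeasurableSet A → volume (g ⁻¹' A ∩ Icc 0 1) = volume A)
    {q : ℝ} (hq0 : 0 < q) (hq1 : q ≤ 1)
    (hpiece : ∃ (k : ℤ) (ε b : ℝ), (ε = 1 ∨ ε = -1) ∧
      ∀ x ∈ Icc (0:ℝ) q, g x = ε * 2 ^ k * x + b)
    (hg0 : g 0 = 0) (hpos : ∀ u ∈ Icc (0:ℝ) 1, u ≠ 0 → g u ≠ 0) :
    ∀ x ∈ Icc (0:ℝ) q, g x = x := by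
  obtain ⟨k, ε, b, hε, hf⟩ := hpiece
  have h2k : (0:ℝ) < 2^k := zpow_pos two_pos k
  have hb : b = 0 := by
    have := hf 0 ⟨le_rfl, hq0.le⟩
    rw [hg0] at this; linarith [this]
  have hqI : q ∈ Icc (0:ℝ) 1 := ⟨hq0.le, hq1⟩
  have hgq : 0 < g q := lt_of_le_of_ne (hmt hqI).1 (Ne.symm (hpos q hqI (ne_of_gt hq0)))
  have hε1 : ε = 1 := by
    rcases hε with h | h
    · exact h
    · exfalso
      have := hf q ⟨hq0.le, le_rfl⟩
      rw [h, hb] at this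
      nlinarith
  have hf' : ∀ x ∈ Icc (0:ℝ) q, g x = 2^k * x := by
    intro x hx; rw [hf x hx, hε1, hb]; ring
  obtain ⟨x₀, hx₀, hmin⟩ := (isCompact_Icc (a := q) (b := 1)).exists_isMinOn
    ⟨q, le_rfl, hq1⟩ (hgc.mono (Icc_subset_Icc hq0.le le_rfl))
  have hx₀I : x₀ ∈ Icc (0:ℝ) 1 := ⟨hq0.le.trans hx₀.1, hx₀.2⟩
  set c := g x₀ with hc
  have hc0 : 0 < c := lt_of_le_of_ne (hmt hx₀I).1
    (Ne.symm (hpos x₀ hx₀I (ne_of_gt (hq0.trans_le hx₀.1))))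
  have hc1 : c ≤ 1 := (hmt hx₀I).2
  set t := min c (2^k * q) / 2 with ht
  have ht0 : 0 < t := by
    rw [ht]; have : 0 < min c (2^k * q) := lt_min hc0 (by positivity); linarith
  have htc : t < c := by
    rw [ht]; have := min_le_left c (2^k * q); linarith
  have htkq : t / 2^k ≤ q / 2 := by
    rw [ht, div_le_div_iff₀ h2k two_pos]  -- maybe easier way
    have := min_le_right c (2^k * q)
    nlinarith
  have ht1 : t ≤ 1 := by linarith
  have hset : g ⁻¹' (Icc 0 t) ∩ Icc 0 1 = Icc 0 (t / 2^k) := by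
    ext x
    constructor
    · rintro ⟨hgx, hxI⟩
      have hgx' : g x ≤ t := hgx.2
      have hxq : x ≤ q := by
        by_contra hx
        push_neg at hx
        have : c ≤ g x := hmin ⟨hx.le, hxI.2⟩
        linarith
      have := hf' x ⟨hxI.1, hxq⟩
      refine ⟨hxI.1, ?_⟩
      rw [le_div_iff₀ h2k]
      nlinarith
    · rintro ⟨hx0, hxt⟩
      have hxq : x ≤ q := by
        have : t / 2^k ≤ q / 2 := htkq
        linarith
      have hgx := hf' x ⟨hx0, hxq⟩
      refine ⟨⟨?_, ?_⟩, hx0, hxq.trans hq1⟩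
      · rw [hgx]; positivity
      · rw [hgx]
        rw [le_div_iff₀ h2k] at hxt
        nlinarith
  have hA := hvol (Icc 0 t) (Icc_subset_Icc le_rfl ht1) measurableSet_Icc
  rw [hset, Real.volume_Icc, Real.volume_Icc, sub_zero, sub_zero] at hA
  have heq : t / 2^k = t := (ENNReal.ofReal_eq_ofReal_iff (by positivity) ht0.le).mp hA
  have h2k1 : (2:ℝ)^k = 1 := by
    field_simp at heq; linarith [heq]
  have hk0 : k = 0 := two_zpow_eq_one' h2k1
  intro x hx
  rw [hf' x hx, hk0, zpow_zero, one_mul]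

lemma right_slope {g : ℝ → ℝ}
    (hmt : MapsTo g (Icc (0:ℝ) 1) (Icc (0:ℝ) 1))
    (hgc : ContinuousOn g (Icc (0:ℝ) 1))
    (hvol : ∀ A ⊆ Icc (0:ℝ) 1, MeasurableSet A → volume (g ⁻¹' A ∩ Icc 0 1) = volume A)
    {r : ℝ} (hr0 : 0 ≤ r) (hr1 : r < 1)
    (hpiece : ∃ (k : ℤ) (ε b : ℝ), (ε = 1 ∨ ε = -1) ∧
      ∀ x ∈ Icc r (1:ℝ), g x = ε * 2 ^ k * x + b)
    (hg1 : g 1 = 1) (hpos : ∀ u ∈ Icc (0:ℝ) 1, u ≠ 1 → g u ≠ 1) :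
    ∀ x ∈ Icc r (1:ℝ), g x = x := by
  obtain ⟨k, ε, b, hε, hf⟩ := hpiece
  have h2k : (0:ℝ) < 2^k := zpow_pos two_pos k
  have hb : b = 1 - ε * 2^k := by
    have := hf 1 ⟨hr1.le, le_rfl⟩
    rw [hg1] at this; linarith [this]
  have hrI : r ∈ Icc (0:ℝ) 1 := ⟨hr0, hr1.le⟩
  have hgr : g r < 1 := lt_of_le_of_ne (hmt hrI).2 (hpos r hrI (ne_of_lt hr1))
  have hε1 : ε = 1 := by
    rcases hε with h | h
    · exact h
    · exfalso
      have := hf r ⟨le_rfl, hr1.le⟩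
      rw [h, hb, h] at this
      nlinarith
  have hf' : ∀ x ∈ Icc r (1:ℝ), g x = 2^k * x + 1 - 2^k := by
    intro x hx; rw [hf x hx, hε1, hb, hε1]; ring
  obtain ⟨x₀, hx₀, hmax⟩ := (isCompact_Icc (a := (0:ℝ)) (b := r)).exists_isMaxOn
    ⟨0, le_rfl, hr0⟩ (hgc.mono (Icc_subset_Icc le_rfl hr1.le))
  have hx₀I : x₀ ∈ Icc (0:ℝ) 1 := ⟨hx₀.1, hx₀.2.trans hr1.le⟩
  set c := g x₀ with hc
  have hc1 : c < 1 := lt_of_le_of_ne (hmt hx₀I).2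
    (hpos x₀ hx₀I (ne_of_lt (lt_of_le_of_lt hx₀.2 hr1)))
  have hc0 : 0 ≤ c := (hmt hx₀I).1
  set t := min (1 - c) (2^k * (1 - r)) / 2 with ht
  have ht0 : 0 < t := by
    rw [ht]
    have : 0 < min (1 - c) (2^k * (1 - r)) := lt_min (by linarith) (by nlinarith)
    linarith
  have htc : c < 1 - t := by
    rw [ht]; have := min_le_left (1 - c) (2^k * (1 - r)); linarith
  have htkq : t / 2^k ≤ (1 - r) / 2 := by
    rw [ht, div_le_div_iff₀ h2k two_pos]
    have := min_le_right (1 - c) (2^k * (1 - r))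
    nlinarith
  have ht1 : 0 ≤ 1 - t := by linarith
  have hset : g ⁻¹' (Icc (1 - t) 1) ∩ Icc 0 1 = Icc (1 - t / 2^k) 1 := by
    ext x
    constructor
    · rintro ⟨hgx, hxI⟩
      have hgx' : 1 - t ≤ g x := hgx.1
      have hxr : r ≤ x := by
        by_contra hx
        push_neg at hx
        have : g x ≤ c := hmax ⟨hxI.1, hx.le⟩
        linarith
      have := hf' x ⟨hxr, hxI.2⟩
      refine ⟨?_, hxI.2⟩
      have hxx : 2^k * (1 - x) ≤ t := by nlinarith
      rw [sub_le_comm ]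
      rw [le_div_iff₀ h2k]
      nlinarith
    · rintro ⟨hx0, hx1⟩
      have hxr : r ≤ x := by
        have h1 : t / 2^k ≤ (1 - r) / 2 := htkq
        linarith
      have hgx := hf' x ⟨hxr, hx1⟩
      have hxle : 1 - x ≤ t / 2^k := by linarith
      rw [le_div_iff₀ h2k] at hxle
      refine ⟨⟨?_, ?_⟩, hxr.trans' hr0, hx1⟩
      · rw [hgx]; nlinarith
      · rw [hgx]; nlinarith
  have hA := hvol (Icc (1 - t) 1) (Icc_subset_Icc ht1 le_rfl) measurableSet_Icc
  rw [hset, Real.volume_Icc, Real.volume_Icc] at hA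
  have e1 : (1:ℝ) - (1 - t / 2^k) = t / 2^k := by ring
  have e2 : (1:ℝ) - (1 - t) = t := by ring
  rw [e1, e2] at hA
  have heq : t / 2^k = t := (ENNReal.ofReal_eq_ofReal_iff (by positivity) ht0.le).mp hA
  have h2k1 : (2:ℝ)^k = 1 := by
    field_simp at heq; linarith [heq]
  have hk0 : k = 0 := two_zpow_eq_one' h2k1
  intro x hx
  rw [hf' x hx, hk0, zpow_zero]; ring

lemma left_slope_flip {g : ℝ → ℝ}
    (hmt : MapsTo g (Icc (0:ℝ) 1) (Icc (0:ℝ) 1))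
    (hgc : ContinuousOn g (Icc (0:ℝ) 1))
    (hvol : ∀ A ⊆ Icc (0:ℝ) 1, MeasurableSet A → volume (g ⁻¹' A ∩ Icc 0 1) = volume A)
    {q : ℝ} (hq0 : 0 < q) (hq1 : q ≤ 1)
    (hpiece : ∃ (k : ℤ) (ε b : ℝ), (ε = 1 ∨ ε = -1) ∧
      ∀ x ∈ Icc (0:ℝ) q, g x = ε * 2 ^ k * x + b)
    (hg0 : g 0 = 1) (hpos : ∀ u ∈ Icc (0:ℝ) 1, u ≠ 0 → g u ≠ 1) :
    ∀ x ∈ Icc (0:ℝ) q, g x = 1 - x := by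
  obtain ⟨k, ε, b, hε, hf⟩ := hpiece
  have h2k : (0:ℝ) < 2^k := zpow_pos two_pos k
  have hb : b = 1 := by
    have := hf 0 ⟨le_rfl, hq0.le⟩
    rw [hg0] at this; linarith [this]
  have hqI : q ∈ Icc (0:ℝ) 1 := ⟨hq0.le, hq1⟩
  have hgq : g q < 1 := lt_of_le_of_ne (hmt hqI).2 (hpos q hqI (ne_of_gt hq0))
  have hε1 : ε = -1 := by
    rcases hε with h | h
    · exfalso
      have := hf q ⟨hq0.le, le_rfl⟩
      rw [h, hb] at this
      nlinarith
    · exact h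
  have hf' : ∀ x ∈ Icc (0:ℝ) q, g x = 1 - 2^k * x := by
    intro x hx; rw [hf x hx, hε1, hb]; ring
  obtain ⟨x₀, hx₀, hmax⟩ := (isCompact_Icc (a := q) (b := 1)).exists_isMaxOn
    ⟨q, le_rfl, hq1⟩ (hgc.mono (Icc_subset_Icc hq0.le le_rfl))
  have hx₀I : x₀ ∈ Icc (0:ℝ) 1 := ⟨hq0.le.trans hx₀.1, hx₀.2⟩
  set c := g x₀ with hc
  have hc1 : c < 1 := lt_of_le_of_ne (hmt hx₀I).2
    (hpos x₀ hx₀I (ne_of_gt (hq0.trans_le hx₀.1)))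
  have hc0 : 0 ≤ c := (hmt hx₀I).1
  set t := min (1 - c) (2^k * q) / 2 with ht
  have ht0 : 0 < t := by
    rw [ht]
    have : 0 < min (1 - c) (2^k * q) := lt_min (by linarith) (by positivity)
    linarith
  have htc : c < 1 - t := by
    rw [ht]; have := min_le_left (1 - c) (2^k * q); linarith
  have htkq : t / 2^k ≤ q / 2 := by
    rw [ht, div_le_div_iff₀ h2k two_pos]
    have := min_le_right (1 - c) (2^k * q)
    nlinarith
  have ht1 : 0 ≤ 1 - t := by linarith
  have hset : g ⁻¹' (Icc (1 - t) 1) ∩ Icc 0 1 = Icc 0 (t / 2^k) := by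
    ext x
    constructor
    · rintro ⟨hgx, hxI⟩
      have hgx' : 1 - t ≤ g x := hgx.1
      have hxq : x ≤ q := by
        by_contra hx
        push_neg at hx
        have : g x ≤ c := hmax ⟨hx.le, hxI.2⟩
        linarith
      have := hf' x ⟨hxI.1, hxq⟩
      refine ⟨hxI.1, ?_⟩
      rw [le_div_iff₀ h2k]
      nlinarith
    · rintro ⟨hx0, hxt⟩
      have hxq : x ≤ q := by linarith [htkq]
      have hgx := hf' x ⟨hx0, hxq⟩
      rw [le_div_iff₀ h2k] at hxt
      refine ⟨⟨?_, ?_⟩, hx0, hxq.trans hq1⟩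
      · rw [hgx]; nlinarith
      · rw [hgx]; nlinarith
  have hA := hvol (Icc (1 - t) 1) (Icc_subset_Icc ht1 le_rfl) measurableSet_Icc
  rw [hset, Real.volume_Icc, Real.volume_Icc] at hA
  have e1 : (1:ℝ) - (1 - t) = t := by ring
  rw [sub_zero, e1] at hA
  have heq : t / 2^k = t := (ENNReal.ofReal_eq_ofReal_iff (by positivity) ht0.le).mp hA
  have h2k1 : (2:ℝ)^k = 1 := by
    field_simp at heq; linarith [heq]
  have hk0 : k = 0 := two_zpow_eq_one' h2k1
  intro x hx
  rw [hf' x hx, hk0, zpow_zero]; ring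

lemma right_slope_flip {g : ℝ → ℝ}
    (hmt : MapsTo g (Icc (0:ℝ) 1) (Icc (0:ℝ) 1))
    (hgc : ContinuousOn g (Icc (0:ℝ) 1))
    (hvol : ∀ A ⊆ Icc (0:ℝ) 1, MeasurableSet A → volume (g ⁻¹' A ∩ Icc 0 1) = volume A)
    {r : ℝ} (hr0 : 0 ≤ r) (hr1 : r < 1)
    (hpiece : ∃ (k : ℤ) (ε b : ℝ), (ε = 1 ∨ ε = -1) ∧
      ∀ x ∈ Icc r (1:ℝ), g x = ε * 2 ^ k * x + b)
    (hg1 : g 1 = 0) (hpos : ∀ u ∈ Icc (0:ℝ) 1, u ≠ 1 → g u ≠ 0) :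
    ∀ x ∈ Icc r (1:ℝ), g x = 1 - x := by
  obtain ⟨k, ε, b, hε, hf⟩ := hpiece
  have h2k : (0:ℝ) < 2^k := zpow_pos two_pos k
  have hb : b = -(ε * 2^k) := by
    have := hf 1 ⟨hr1.le, le_rfl⟩
    rw [hg1] at this; linarith [this]
  have hrI : r ∈ Icc (0:ℝ) 1 := ⟨hr0, hr1.le⟩
  have hgr : 0 < g r := lt_of_le_of_ne (hmt hrI).1 (Ne.symm (hpos r hrI (ne_of_lt hr1)))
  have hε1 : ε = -1 := by
    rcases hε with h | h
    · exfalso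
      have := hf r ⟨le_rfl, hr1.le⟩
      rw [h, hb, h] at this
      nlinarith
    · exact h
  have hf' : ∀ x ∈ Icc r (1:ℝ), g x = 2^k * (1 - x) := by
    intro x hx; rw [hf x hx, hε1, hb, hε1]; ring
  obtain ⟨x₀, hx₀, hmin⟩ := (isCompact_Icc (a := (0:ℝ)) (b := r)).exists_isMinOn
    ⟨0, le_rfl, hr0⟩ (hgc.mono (Icc_subset_Icc le_rfl hr1.le))
  have hx₀I : x₀ ∈ Icc (0:ℝ) 1 := ⟨hx₀.1, hx₀.2.trans hr1.le⟩
  set c := g x₀ with hc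
  have hc0 : 0 < c := lt_of_le_of_ne (hmt hx₀I).1
    (Ne.symm (hpos x₀ hx₀I (ne_of_lt (lt_of_le_of_lt hx₀.2 hr1))))
  have hc1 : c ≤ 1 := (hmt hx₀I).2
  set t := min c (2^k * (1 - r)) / 2 with ht
  have ht0 : 0 < t := by
    rw [ht]
    have : 0 < min c (2^k * (1 - r)) := lt_min hc0 (by nlinarith)
    linarith
  have htc : t < c := by
    rw [ht]; have := min_le_left c (2^k * (1 - r)); linarith
  have htkq : t / 2^k ≤ (1 - r) / 2 := by
    rw [ht, div_le_div_iff₀ h2k two_pos]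
    have := min_le_right c (2^k * (1 - r))
    nlinarith
  have ht1 : t ≤ 1 := by linarith
  have hset : g ⁻¹' (Icc 0 t) ∩ Icc 0 1 = Icc (1 - t / 2^k) 1 := by
    ext x
    constructor
    · rintro ⟨hgx, hxI⟩
      have hgx' : g x ≤ t := hgx.2
      have hxr : r ≤ x := by
        by_contra hx
        push_neg at hx
        have : c ≤ g x := hmin ⟨hxI.1, hx.le⟩
        linarith
      have := hf' x ⟨hxr, hxI.2⟩
      refine ⟨?_, hxI.2⟩
      rw [sub_le_comm, le_div_iff₀ h2k]
      nlinarith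
    · rintro ⟨hx0, hx1⟩
      have hxr : r ≤ x := by
        have h1 : t / 2^k ≤ (1 - r) / 2 := htkq
        linarith
      have hgx := hf' x ⟨hxr, hx1⟩
      have hxle : 1 - x ≤ t / 2^k := by linarith
      rw [le_div_iff₀ h2k] at hxle
      refine ⟨⟨?_, ?_⟩, hxr.trans' hr0, hx1⟩
      · rw [hgx]; nlinarith
      · rw [hgx]; nlinarith
  have hA := hvol (Icc 0 t) (Icc_subset_Icc le_rfl ht1) measurableSet_Icc
  rw [hset, Real.volume_Icc, Real.volume_Icc] at hA
  have e1 : (1:ℝ) - (1 - t / 2^k) = t / 2^k := by ring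
  rw [e1, sub_zero] at hA
  have heq : t / 2^k = t := (ENNReal.ofReal_eq_ofReal_iff (by positivity) ht0.le).mp hA
  have h2k1 : (2:ℝ)^k = 1 := by
    field_simp at heq; linarith [heq]
  have hk0 : k = 0 := two_zpow_eq_one' h2k1
  intro x hx
  rw [hf' x hx, hk0, zpow_zero]; ring

theorem stmt_14 (g : ℝ → ℝ) (hg : InG g) (htm : TopMixing g) : LEO g := by
  obtain ⟨hgc, hmt, hsurj, hvol, n, p, hn, hp0, hpn, hplt, hdy, hpieces⟩ := hg
  have hmono : ∀ i j : ℕ, i ≤ j → j ≤ n → p i ≤ p j := by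
    intro i j hij hjn
    induction j with
    | zero => rw [Nat.le_zero.mp hij]
    | succ j ih =>
      rcases Nat.eq_or_lt_of_le hij with rfl | hlt'
      · exact le_rfl
      · have h1 : i ≤ j := by omega
        have h2 : j ≤ n := by omega
        exact (ih h1 h2).trans (hplt j (by omega)).le
  have hq0 : 0 < p 1 := by rw [← hp0]; exact hplt 0 hn
  have hq1 : p 1 ≤ 1 := by rw [← hpn]; exact hmono 1 n hn le_rfl
  have hr0 : 0 ≤ p (n - 1) := by rw [← hp0]; exact hmono 0 (n - 1) (Nat.zero_le _) (by omega)
  have hr1 : p (n - 1) < 1 := by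
    have := hplt (n - 1) (by omega)
    have he : n - 1 + 1 = n := by omega
    rw [he, hpn] at this; exact this
  have hpiece1 := hpieces 0 hn
  rw [hp0] at hpiece1
  have hpieceN := hpieces (n - 1) (by omega)
  have he : n - 1 + 1 = n := by omega
  rw [he, hpn] at hpieceN
  -- impossibility cases
  have caseA : g 0 = 0 → (∀ u ∈ Icc (0:ℝ) 1, u ≠ 0 → g u ≠ 0) → False := fun h1 h2 =>
    no_id_piece htm le_rfl hq0 hq1 (left_slope hmt hgc hvol hq0 hq1 hpiece1 h1 h2)
  have caseB : g 1 = 1 → (∀ u ∈ Icc (0:ℝ) 1, u ≠ 1 → g u ≠ 1) → False := fun h1 h2 =>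
    no_id_piece htm hr0 hr1 le_rfl (right_slope hmt hgc hvol hr0 hr1 hpieceN h1 h2)
  have caseC : g 0 = 1 → g 1 = 0 → (∀ z ∈ Ioo (0:ℝ) 1, g z ≠ 0) →
      (∀ z ∈ Ioo (0:ℝ) 1, g z ≠ 1) → False := by
    intro h01 h10 hz0 hz1
    have hposL : ∀ u ∈ Icc (0:ℝ) 1, u ≠ 0 → g u ≠ 1 := by
      intro u huI hu hgu
      rcases eq_or_lt_of_le huI.2 with h' | h'
      · rw [h'] at hgu; rw [hgu] at h10; norm_num at h10
      · exact hz1 u ⟨lt_of_le_of_ne huI.1 (Ne.symm hu), h'⟩ hgu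
    have hposR : ∀ u ∈ Icc (0:ℝ) 1, u ≠ 1 → g u ≠ 0 := by
      intro u huI hu hgu
      rcases eq_or_lt_of_le huI.1 with h' | h'
      · rw [← h'] at hgu; rw [hgu] at h01; norm_num at h01
      · exact hz0 u ⟨h', lt_of_le_of_ne huI.2 hu⟩ hgu
    have hL := left_slope_flip hmt hgc hvol hq0 hq1 hpiece1 h01 hposL
    have hR := right_slope_flip hmt hgc hvol hr0 hr1 hpieceN h10 hposR
    set δ := min (p 1) (1 - p (n - 1)) with hδ
    have hδ0 : 0 < δ := lt_min hq0 (by linarith)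
    have hδ1 : δ ≤ 1 := le_trans (min_le_left _ _) hq1
    refine no_per2 htm hδ0 hδ1 ?_
    intro x hx
    have hx1 : x ≤ p 1 := hx.2.trans (min_le_left _ _)
    have hgx : g x = 1 - x := hL x ⟨hx.1, hx1⟩
    have h1x : 1 - x ∈ Icc (p (n - 1)) 1 := by
      constructor
      · have : δ ≤ 1 - p (n - 1) := min_le_right _ _
        have := hx.2
        linarith
      · linarith [hx.1]
    rw [hgx, hR (1 - x) h1x]; ring
  -- main argument
  intro U hU hUne
  obtain ⟨W, hWopen, rfl⟩ := hU
  obtain ⟨x, hxW, hxI⟩ := hUne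
  obtain ⟨a, b, hab, hJW, hJI⟩ :
      ∃ a b : ℝ, a < b ∧ Icc a b ⊆ W ∩ Icc 0 1 ∧ Icc a b ⊆ Icc 0 1 := by
    obtain ⟨r, hrpos, hball⟩ := Metric.isOpen_iff.mp hWopen x hxW
    by_cases hx1 : x < 1
    · refine ⟨x, min (x + r / 2) 1, lt_min (by linarith) hx1, ?_, ?_⟩
      · intro y hy
        have hy2 : y ≤ x + r / 2 := hy.2.trans (min_le_left _ _)
        refine ⟨hball ?_, hxI.1.trans hy.1, hy.2.trans (min_le_right _ _)⟩
        rw [Metric.mem_ball, Real.dist_eq, abs_lt]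
        constructor <;> [linarith [hy.1]; linarith]
      · intro y hy
        exact ⟨hxI.1.trans hy.1, hy.2.trans (min_le_right _ _)⟩
    · have hx1' : x = 1 := le_antisymm hxI.2 (not_lt.mp hx1)
      subst hx1'
      refine ⟨max (1 - r / 2) 0, 1, max_lt (by linarith) one_pos, ?_, ?_⟩
      · intro y hy
        have hy1 : 1 - r / 2 ≤ y := (le_max_left _ _).trans hy.1
        refine ⟨hball ?_, (le_max_right _ _).trans hy.1, hy.2⟩
        rw [Metric.mem_ball, Real.dist_eq, abs_lt]
        constructor <;> [linarith [hy.2]; linarith [hy.2]]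
      · intro y hy
        exact ⟨(le_max_right _ _).trans hy.1, hy.2⟩
  have ha0 : 0 ≤ a := (hJI (left_mem_Icc.mpr hab.le)).1
  have hb1 : b ≤ 1 := (hJI (right_mem_Icc.mpr hab.le)).2
  have hiterM : ∀ m : ℕ, MapsTo (g^[m]) (Icc (0:ℝ) 1) (Icc (0:ℝ) 1) := fun m =>
    hmt.iterate m
  have hiterC : ∀ m : ℕ, ContinuousOn (g^[m]) (Icc (0:ℝ) 1) := by
    intro m
    induction m with
    | zero => simpa using continuousOn_id
    | succ m ih =>
      rw [Function.iterate_succ']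
      exact hgc.comp ih (hiterM m)
  set S : ℕ → Set ℝ := fun m => g^[m] '' Icc a b with hS
  have hSsub : ∀ m, S m ⊆ Icc (0:ℝ) 1 := by
    rintro m y ⟨z, hz, rfl⟩
    exact hiterM m (hJI hz)
  have hScon : ∀ m, IsPreconnected (S m) := fun m =>
    (isPreconnected_Icc).image _ ((hiterC m).mono hJI)
  have hmix : ∀ z : ℝ, z ∈ Ioo (0:ℝ) 1 → ∃ N, ∀ m ≥ N, z ∈ S m := by
    intro z hz
    have hsubJ : Ioo a b ∩ Icc 0 1 ⊆ Icc a b := fun w hw => Ioo_subset_Icc_self hw.1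
    obtain ⟨N₁, hN₁⟩ := htm (Ioo a b ∩ Icc 0 1) (Ioo 0 z ∩ Icc 0 1)
      (relOpen_Ioo_inter _ _) (relOpen_Ioo_inter _ _)
      ⟨(a + b) / 2, ⟨by linarith, by linarith⟩, by constructor <;> linarith⟩
      ⟨z / 2, ⟨by linarith [hz.1], by linarith [hz.1]⟩,
        by constructor <;> linarith [hz.1, hz.2]⟩
    obtain ⟨N₂, hN₂⟩ := htm (Ioo a b ∩ Icc 0 1) (Ioo z 1 ∩ Icc 0 1)
      (relOpen_Ioo_inter _ _) (relOpen_Ioo_inter _ _)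
      ⟨(a + b) / 2, ⟨by linarith, by linarith⟩, by constructor <;> linarith⟩
      ⟨(z + 1) / 2, ⟨by linarith [hz.2], by linarith [hz.2]⟩,
        by constructor <;> linarith [hz.1, hz.2]⟩
    refine ⟨max N₁ N₂, fun m hm => ?_⟩
    obtain ⟨y₁, hy₁S, hy₁V⟩ := hN₁ m (le_trans (le_max_left _ _) hm)
    obtain ⟨y₂, hy₂S, hy₂V⟩ := hN₂ m (le_trans (le_max_right _ _) hm)
    have hy₁' : y₁ ∈ S m := image_mono (f := g^[m]) hsubJ hy₁S
    have hy₂' : y₂ ∈ S m := image_mono (f := g^[m]) hsubJ hy₂S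
    exact (hScon m).Icc_subset hy₁' hy₂' ⟨hy₁V.1.2.le, hy₂V.1.1.le⟩
  have hstep : ∀ c : ℝ, (∃ N, ∀ m ≥ N, c ∈ S m) → ∃ N, ∀ m ≥ N, g c ∈ S m := by
    rintro c ⟨N, hN⟩
    refine ⟨N + 1, fun m hm => ?_⟩
    obtain ⟨m', rfl⟩ : ∃ m', m = m' + 1 := ⟨m - 1, by omega⟩
    obtain ⟨w, hw, hwc⟩ := hN m' (by omega)
    exact ⟨w, hw, by rw [Function.iterate_succ_apply', hwc]⟩
  have hclass : ∀ v : ℝ, (¬ ∃ z ∈ Ioo (0:ℝ) 1, g z = v) →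
      ∀ x ∈ Icc (0:ℝ) 1, g x = v → x = 0 ∨ x = 1 := by
    intro v hv x hxI' hx
    rcases eq_or_lt_of_le hxI'.1 with h | h
    · exact Or.inl h.symm
    rcases eq_or_lt_of_le hxI'.2 with h' | h'
    · exact Or.inr h'
    exact absurd ⟨x, ⟨h, h'⟩, hx⟩ hv
  obtain ⟨w₀, hw₀I, hw₀⟩ := hsurj (left_mem_Icc.mpr zero_le_one)
  obtain ⟨w₁, hw₁I, hw₁⟩ := hsurj (right_mem_Icc.mpr zero_le_one)
  have ev0_of_int : (∃ z ∈ Ioo (0:ℝ) 1, g z = 0) → ∃ N, ∀ m ≥ N, (0:ℝ) ∈ S m := by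
    rintro ⟨z, hz, hgz⟩
    have := hstep z (hmix z hz)
    rwa [hgz] at this
  have ev1_of_int : (∃ z ∈ Ioo (0:ℝ) 1, g z = 1) → ∃ N, ∀ m ≥ N, (1:ℝ) ∈ S m := by
    rintro ⟨z, hz, hgz⟩
    have := hstep z (hmix z hz)
    rwa [hgz] at this
  have key : (∃ N, ∀ m ≥ N, (0:ℝ) ∈ S m) ∧ (∃ N, ∀ m ≥ N, (1:ℝ) ∈ S m) := by
    by_cases hZi : ∃ z ∈ Ioo (0:ℝ) 1, g z = 0
    · have h0 := ev0_of_int hZi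
      by_cases hOi : ∃ z ∈ Ioo (0:ℝ) 1, g z = 1
      · exact ⟨h0, ev1_of_int hOi⟩
      · rcases hclass 1 hOi w₁ hw₁I hw₁ with h | h
        · subst h
          have h1 := hstep 0 h0
          rw [hw₁] at h1
          exact ⟨h0, h1⟩
        · subst h
          by_cases hg01 : g 0 = 1
          · have h1 := hstep 0 h0
            rw [hg01] at h1
            exact ⟨h0, h1⟩
          · exfalso
            refine caseB hw₁ ?_
            intro u huI hu1 hgu
            rcases eq_or_lt_of_le huI.1 with h' | h'
            · exact hg01 (h' ▸ hgu)
            · exact hOi ⟨u, ⟨h', lt_of_le_of_ne huI.2 hu1⟩, hgu⟩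
    · by_cases hOi : ∃ z ∈ Ioo (0:ℝ) 1, g z = 1
      · have h1 := ev1_of_int hOi
        rcases hclass 0 hZi w₀ hw₀I hw₀ with h | h
        · subst h
          by_cases hg10 : g 1 = 0
          · have h0 := hstep 1 h1
            rw [hg10] at h0
            exact ⟨h0, h1⟩
          · exfalso
            refine caseA hw₀ ?_
            intro u huI hu0 hgu
            rcases eq_or_lt_of_le huI.2 with h' | h'
            · exact hg10 (h' ▸ hgu)
            · exact hZi ⟨u, ⟨lt_of_le_of_ne huI.1 (Ne.symm hu0), h'⟩, hgu⟩
        · subst h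
          have h0 := hstep 1 h1
          rw [hw₀] at h0
          exact ⟨h0, h1⟩
      · exfalso
        rcases hclass 0 hZi w₀ hw₀I hw₀ with hz | hz <;>
          rcases hclass 1 hOi w₁ hw₁I hw₁ with ho | ho
        · subst hz; subst ho
          rw [hw₀] at hw₁; norm_num at hw₁
        · subst hz; subst ho
          refine caseB hw₁ ?_
          intro u huI hu1 hgu
          rcases eq_or_lt_of_le huI.1 with h' | h'
          · rw [← h'] at hgu; rw [hgu] at hw₀; norm_num at hw₀
          · exact hOi ⟨u, ⟨h', lt_of_le_of_ne huI.2 hu1⟩, hgu⟩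
        · subst hz; subst ho
          exact caseC hw₁ hw₀ (fun z hz' hgz => hZi ⟨z, hz', hgz⟩)
            (fun z hz' hgz => hOi ⟨z, hz', hgz⟩)
        · subst hz; subst ho
          rw [hw₀] at hw₁; norm_num at hw₁
  obtain ⟨⟨N₀, h0⟩, ⟨N₁, h1⟩⟩ := key
  refine ⟨max N₀ N₁, ?_⟩
  apply Subset.antisymm
  · rintro y ⟨w, hw, rfl⟩
    exact hiterM _ hw.2
  · have h0m : (0:ℝ) ∈ S (max N₀ N₁) := h0 _ (le_max_left _ _)
    have h1m : (1:ℝ) ∈ S (max N₀ N₁) := h1 _ (le_max_right _ _)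
    have hsub : Icc (0:ℝ) 1 ⊆ S (max N₀ N₁) := (hScon _).Icc_subset h0m h1m
    exact hsub.trans (image_mono hJW)
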